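/- Let G be a finite simple graph with vertex set {1,…,n} and edge set E, and let k ≥ 1 and m be natural numbers. The following system of polynomials in the variables y_{ij} ({i,j} ∈ E) has a common zero over ℂ if and only if G has a k-regular subgraph with m edges, i.e., there is a set E' ⊆ E with |E'| = m such that every vertex of G is incident to either exactly k edges of E' or to no edge of E': (∑_{{i,j}∈E} y_{ij}) − m = 0; y_{ij}² − y_{ij} = 0 for all {i,j} ∈ E; and (∑_{j∈N(i)} y_{ij})·((∑_{j∈N(i)} y_{ij}) − k) = 0 for every i ∈ {1,…,n}. -/
import Mathlib


open Finset


lemma incid_eq {n : ℕ} (G : SimpleGraph (Fin n)) [DecidableRel G.Adj] (i : Fin n) :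
    G.edgeFinset.filter (fun e => i ∈ e) =
      (G.neighborFinset i).image (fun j => s(i, j)) := by
  ext e
  simp only [mem_filter, mem_image, SimpleGraph.mem_neighborFinset, SimpleGraph.mem_edgeFinset]
  constructor
  · rintro ⟨he, hi⟩
    induction e with
    | h x y =>
      rcases Sym2.mem_iff.mp hi with rfl | rfl
      · exact ⟨y, he, rfl⟩
      · exact ⟨x, (G.adj_symm he), Sym2.eq_swap⟩
  · rintro ⟨j, hj, rfl⟩
    exact ⟨hj, Sym2.mem_mk_left i j⟩

lemma sum_nbhd {n : ℕ} (G : SimpleGraph (Fin n)) [DecidableRel G.Adj] (i : Fin n)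
    (f : Sym2 (Fin n) → ℂ) :
    ∑ j ∈ G.neighborFinset i, f s(i, j) =
      ∑ e ∈ G.edgeFinset.filter (fun e => i ∈ e), f e := by
  rw [incid_eq, Finset.sum_image]
  intro a ha b hb hab
  rcases Sym2.eq_iff.mp hab with ⟨-, h⟩ | ⟨rfl, rfl⟩
  · exact h
  · rfl

lemma sum01 {α : Type*} [DecidableEq α] (S : Finset α) (f : α → ℂ)
    [DecidablePred fun e => f e = 1]
    (h : ∀ e ∈ S, f e = 0 ∨ f e = 1) :
    ∑ e ∈ S, f e = ((S.filter fun e => f e = 1).card : ℂ) := by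
  rw [← Finset.sum_filter_add_sum_filter_not S (fun e => f e = 1)]
  have h1 : ∑ e ∈ S.filter (fun e => f e = 1), f e
      = ((S.filter fun e => f e = 1).card : ℂ) := by
    rw [Finset.sum_congr rfl (fun e he => (Finset.mem_filter.mp he).2)]
    simp
  have h2 : ∑ e ∈ S.filter (fun e => ¬ f e = 1), f e = 0 := by
    refine Finset.sum_eq_zero fun e he => ?_
    obtain ⟨heS, hne⟩ := Finset.mem_filter.mp he
    rcases h e heS with h0 | h1
    · exact h0
    · exact absurd h1 hne
  rw [h1, h2, add_zero]

/-- The system `(∑_{{i,j}∈E} y_{ij}) − m`,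
`y_{ij}² − y_{ij}`, `(∑_{j∈N(i)} y_{ij})·((∑_{j∈N(i)} y_{ij}) − k)` has a
common zero over `ℂ` iff `G` has a `k`-regular subgraph with `m` edges: a set
`E' ⊆ E` of `m` edges such that every vertex of `G` is incident to exactly
`k` edges of `E'` or to none. -/
theorem stmt13 (n : ℕ) (G : SimpleGraph (Fin n)) [DecidableRel G.Adj]
    (k m : ℕ) (hk : 1 ≤ k) :
    (∃ zy : Sym2 (Fin n) → ℂ,
      (∑ e ∈ G.edgeFinset, zy e) - (m : ℂ) = 0 ∧
      (∀ e ∈ G.edgeFinset, zy e ^ 2 - zy e = 0) ∧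
      (∀ i : Fin n,
        (∑ j ∈ G.neighborFinset i, zy s(i, j)) *
          ((∑ j ∈ G.neighborFinset i, zy s(i, j)) - (k : ℂ)) = 0))
    ↔
    (∃ E' ⊆ G.edgeFinset, E'.card = m ∧
      ∀ v : Fin n,
        (E'.filter fun e => v ∈ e).card = k ∨
        (E'.filter fun e => v ∈ e).card = 0) := by
  classical
  constructor
  · rintro ⟨zy, h1, h2, h3⟩
    have hval : ∀ e ∈ G.edgeFinset, zy e = 0 ∨ zy e = 1 := by
      intro e he
      have h : zy e * (zy e - 1) = 0 := by linear_combination h2 e he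
      rcases mul_eq_zero.mp h with h | h
      · exact Or.inl h
      · exact Or.inr (by linear_combination h)
    refine ⟨G.edgeFinset.filter (fun e => zy e = 1), Finset.filter_subset _ _, ?_, ?_⟩
    · have hsum := sum01 G.edgeFinset zy hval
      rw [hsum, sub_eq_zero] at h1
      exact_mod_cast h1
    · intro v
      have hsum : ∑ j ∈ G.neighborFinset v, zy s(v, j)
          = ((((G.edgeFinset.filter (fun e => zy e = 1)).filter
              fun e => v ∈ e)).card : ℂ) := by
        rw [sum_nbhd, sum01 _ zy (fun e he => hval e (Finset.mem_filter.mp he).1),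
          Finset.filter_comm]
      have h3v := h3 v
      rw [hsum] at h3v
      rcases mul_eq_zero.mp h3v with h | h
      · exact Or.inr (by exact_mod_cast h)
      · rw [sub_eq_zero] at h
        exact Or.inl (by exact_mod_cast h)
  · rintro ⟨E', hsub, hcard, hv⟩
    refine ⟨fun e => if e ∈ E' then 1 else 0, ?_, ?_, ?_⟩
    · rw [Finset.sum_ite_mem, Finset.inter_eq_right.mpr hsub, Finset.sum_const,
        hcard, sub_eq_zero]
      simp
    · intro e he
      by_cases h : e ∈ E' <;> simp [h]
    · intro i
      have hsum : ∑ j ∈ G.neighborFinset i, (if s(i, j) ∈ E' then (1:ℂ) else 0)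
          = ((E'.filter fun e => i ∈ e).card : ℂ) := by
        rw [sum_nbhd G i (fun e => if e ∈ E' then (1:ℂ) else 0), Finset.sum_ite_mem, Finset.sum_const]
        have : G.edgeFinset.filter (fun e => i ∈ e) ∩ E' = E'.filter fun e => i ∈ e := by
          ext e
          simp only [Finset.mem_inter, Finset.mem_filter]
          exact ⟨fun ⟨⟨_, h2⟩, h3⟩ => ⟨h3, h2⟩, fun ⟨h3, h2⟩ => ⟨⟨hsub h3, h2⟩, h3⟩⟩
        rw [this]
        simp
      rw [hsum]
      rcases hv i with h | h <;> rw [h]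
      · simp
      · simp
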